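/- Let $(a_n)_{n\geq 1}$ be a sequence of positive reals with $\sum_{n=1}^\infty a_n = \infty$. Then for every $\delta < 0$, the series $\sum_{n=1}^\infty a_n \left(\sum_{k=1}^n a_k\right)^{\delta - 1}$ converges. -/

import Mathlib

open Filter Finset

/-- Bernoulli-type inequality for negative exponents: `u^δ ≥ 1 + δ(u-1)` for `u > 0`, `δ < 0`. -/
lemma rpow_ge_one_add_mul_neg {u δ : ℝ} (hu : 0 < u) (hδ : δ < 0) :
    1 + δ * (u - 1) ≤ u ^ δ := by
  have h1 : u ^ δ = Real.exp (Real.log u * δ) := Real.rpow_def_of_pos hu δ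
  have h2 : 1 + Real.log u * δ ≤ Real.exp (Real.log u * δ) :=
    Real.add_one_le_exp _ |>.trans_eq' (by ring_nf)
  have h3 : Real.log u ≤ u - 1 := Real.log_le_sub_one_of_pos hu
  nlinarith [Real.add_one_le_exp (Real.log u * δ)]

/-- Abel–Dini: if `∑ aₙ = ∞` with `aₙ > 0`, then for `δ < 0` the series
`∑ aₙ Sₙ^(δ-1)` converges, where `Sₙ` is the `n`-th partial sum. -/
theorem abel_dini_converge (a : ℕ → ℝ) (ha : ∀ n, 0 < a n)
    (hdiv : Tendsto (fun n => ∑ k ∈ Finset.range (n + 1), a k) atTop atTop)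
    (δ : ℝ) (hδ : δ < 0) :
    Summable (fun n => a n * (∑ k ∈ Finset.range (n + 1), a k) ^ (δ - 1)) := by
  set S : ℕ → ℝ := fun n => ∑ k ∈ Finset.range (n + 1), a k with hS
  have hSpos : ∀ n, 0 < S n := fun n =>
    Finset.sum_pos (fun i _ => ha i) (by simp)
  set f : ℕ → ℝ := fun n => a n * S n ^ (δ - 1) with hf
  have hfpos : ∀ n, 0 < f n := fun n =>
    mul_pos (ha n) (Real.rpow_pos_of_pos (hSpos n) _)
  -- key inequality
  have key : ∀ n, f (n + 1) ≤ (S n ^ δ - S (n + 1) ^ δ) / (-δ) := by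
    intro n
    have hx : 0 < S n := hSpos n
    have hy : 0 < S (n + 1) := hSpos (n + 1)
    have hstep : S (n + 1) = S n + a (n + 1) := by
      simp [hS, Finset.sum_range_succ]
    have hu : 0 < S n / S (n + 1) := div_pos hx hy
    have hb := rpow_ge_one_add_mul_neg hu hδ
    have hdiv' : (S n / S (n + 1)) ^ δ = S n ^ δ / S (n + 1) ^ δ :=
      Real.div_rpow hx.le hy.le δ
    rw [hdiv'] at hb
    have hyδ : 0 < S (n + 1) ^ δ := Real.rpow_pos_of_pos hy _
    -- multiply by S(n+1)^δ
    have hb2 : S (n + 1) ^ δ * (1 + δ * (S n / S (n + 1) - 1)) ≤ S n ^ δ := by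
      calc S (n + 1) ^ δ * (1 + δ * (S n / S (n + 1) - 1))
          ≤ S (n + 1) ^ δ * (S n ^ δ / S (n + 1) ^ δ) := by
            exact mul_le_mul_of_nonneg_left hb hyδ.le
        _ = S n ^ δ := by field_simp
    have hpow : S (n + 1) ^ δ / S (n + 1) = S (n + 1) ^ (δ - 1) := by
      rw [Real.rpow_sub_one hy.ne']
    have hb3 : S (n + 1) ^ δ + δ * (S (n + 1) ^ (δ - 1) * (S n - S (n + 1))) ≤ S n ^ δ := by
      have : S (n + 1) ^ δ * (1 + δ * (S n / S (n + 1) - 1))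
          = S (n + 1) ^ δ + δ * ((S (n + 1) ^ δ / S (n + 1)) * (S n - S (n + 1))) := by
        field_simp
      rw [this, hpow] at hb2
      exact hb2
    have han : S n - S (n + 1) = -(a (n + 1)) := by rw [hstep]; ring
    rw [han] at hb3
    rw [le_div_iff₀ (by linarith : (0:ℝ) < -δ)]
    show f (n + 1) * -δ ≤ S n ^ δ - S (n + 1) ^ δ
    have : f (n + 1) = a (n + 1) * S (n + 1) ^ (δ - 1) := rfl
    nlinarith [hb3]
  -- partial sums bounded
  have hbound : ∀ n, ∑ i ∈ Finset.range n, f i ≤ f 0 + S 0 ^ δ / (-δ) := by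
    intro n
    have hδ' : (0:ℝ) < -δ := by linarith
    cases n with
    | zero =>
      simp only [Finset.range_zero, Finset.sum_empty]
      have h0 : 0 < S 0 ^ δ / (-δ) := div_pos (Real.rpow_pos_of_pos (hSpos 0) _) hδ'
      linarith [hfpos 0]
    | succ m =>
      rw [Finset.sum_range_succ']
      have h1 : ∑ i ∈ Finset.range m, f (i + 1)
          ≤ ∑ i ∈ Finset.range m, (S i ^ δ - S (i + 1) ^ δ) / (-δ) :=
        Finset.sum_le_sum fun i _ => key i
      have h2 : ∑ i ∈ Finset.range m, (S i ^ δ - S (i + 1) ^ δ) / (-δ)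
          = (S 0 ^ δ - S m ^ δ) / (-δ) := by
        rw [← Finset.sum_div, Finset.sum_range_sub' (fun i => S i ^ δ)]
      have h3 : (S 0 ^ δ - S m ^ δ) / (-δ) ≤ S 0 ^ δ / (-δ) := by
        have hm : 0 < S m ^ δ := Real.rpow_pos_of_pos (hSpos m) _
        gcongr
        linarith
      linarith [h1, h2 ▸ h1]
  exact summable_of_sum_range_le (fun n => (hfpos n).le) hbound
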